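/- For the van der Waals pressure p and free energy F with c ∈ D, the quantity D̃(c) = ∑ᵢⱼ cᵢcⱼ ∂²F/∂cᵢ∂cⱼ satisfies the identity D̃ = c̄/(1 − ∑ᵢ bᵢcᵢ)² − ∑ᵢⱼ aᵢⱼcᵢcⱼ, and consequently D̃ ≥ p. -/

import Mathlib

/-- the quantity `D̃ = ∑ᵢⱼ cᵢcⱼ ∂²F/∂cᵢ∂cⱼ` satisfies
`D̃ = c̄/(1-∑bᵢcᵢ)² - ∑ᵢⱼ aᵢⱼcᵢcⱼ`, hence `D̃ ≥ p`. -/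
theorem stmt13 (n : ℕ) (b : Fin n → ℝ) (a : Fin n → Fin n → ℝ)
    (hb : ∀ i, 0 < b i) (ha : ∀ i j, a i j = a j i)
    (c : Fin n → ℝ) (hc : ∀ i, 0 < c i) (hbc : ∑ j, b j * c j < 1)
    (σ : ℝ) (hσ : σ = 1 / (1 - ∑ k, b k * c k))
    (H : Fin n → Fin n → ℝ)
    (hH : ∀ i j, H i j = (b i + b j) * σ + b i * b j * (∑ k, c k) * σ ^ 2
      + (if i = j then (1:ℝ) else 0) / c i - a i j)
    (Dt p : ℝ)
    (hDt : Dt = ∑ i, ∑ j, c i * c j * H i j)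
    (hp : p = (∑ i, c i) / (1 - ∑ j, b j * c j) - ∑ i, ∑ j, a i j * c i * c j) :
    Dt = (∑ i, c i) / (1 - ∑ i, b i * c i) ^ 2 - ∑ i, ∑ j, a i j * c i * c j
      ∧ Dt ≥ p := by
  set S := ∑ k, b k * c k with hS
  set T := ∑ k, c k with hT
  have hS1 : (0:ℝ) < 1 - S := by linarith
  have hS0 : 0 ≤ S := Finset.sum_nonneg fun k _ => le_of_lt (mul_pos (hb k) (hc k))
  have hT0 : 0 ≤ T := Finset.sum_nonneg fun k _ => le_of_lt (hc k)
  have hσ1 : σ * (1 - S) = 1 := by rw [hσ]; field_simp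
  have hσpos : 0 < σ := by rw [hσ]; positivity
  have hσge : 1 ≤ σ := by nlinarith
  have inner : ∀ i, ∑ j, c i * c j * H i j
      = c i * b i * (σ * T) + c i * (σ * S) + c i * b i * (T * σ^2 * S) + c i
        - ∑ j, a i j * c i * c j := by
    intro i
    have hterm : ∀ j, c i * c j * H i j =
        c j * (c i * (b i * σ)) + (b j * c j) * (c i * σ)
        + (b j * c j) * (c i * b i * T * σ^2)
        + (if j = i then c i else 0) - a i j * c i * c j := by
      intro j
      rw [hH]
      rcases eq_or_ne j i with rfl | hji
      · simp only [if_pos rfl, ↓reduceIte]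
        field_simp [(hc j).ne']
      · simp only [if_neg hji, if_neg (Ne.symm hji)]
        field_simp
        ring
    calc ∑ j, c i * c j * H i j
        = ∑ j, (c j * (c i * (b i * σ)) + (b j * c j) * (c i * σ)
          + (b j * c j) * (c i * b i * T * σ^2)
          + (if j = i then c i else 0) - a i j * c i * c j) :=
          Finset.sum_congr rfl fun j _ => hterm j
      _ = _ := by
          rw [Finset.sum_sub_distrib, Finset.sum_add_distrib, Finset.sum_add_distrib,
            Finset.sum_add_distrib, ← Finset.sum_mul, ← Finset.sum_mul,
            ← Finset.sum_mul, Finset.sum_ite_eq' Finset.univ i (fun _ => c i)]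
          simp only [Finset.mem_univ, if_pos, ← hS, ← hT]
          ring
  have hDt' : Dt = T * σ^2 - ∑ i, ∑ j, a i j * c i * c j := by
    rw [hDt]
    calc (∑ i, ∑ j, c i * c j * H i j)
        = ∑ i, (c i * b i * (σ * T) + c i * (σ * S) + c i * b i * (T * σ^2 * S) + c i
            - ∑ j, a i j * c i * c j) := Finset.sum_congr rfl fun i _ => inner i
      _ = (∑ i, c i * b i) * (σ * T) + T * (σ * S) + (∑ i, c i * b i) * (T * σ^2 * S) + T
            - ∑ i, ∑ j, a i j * c i * c j := by
          rw [Finset.sum_sub_distrib, Finset.sum_add_distrib, Finset.sum_add_distrib,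
            Finset.sum_add_distrib, ← Finset.sum_mul, ← Finset.sum_mul, ← Finset.sum_mul,
            ← hT]
      _ = S * (σ * T) + T * (σ * S) + S * (T * σ^2 * S) + T
            - ∑ i, ∑ j, a i j * c i * c j := by
          have h2 : (∑ i, c i * b i) = S := by
            rw [hS]; exact Finset.sum_congr rfl fun i _ => mul_comm _ _
          rw [h2]
      _ = T * σ^2 - ∑ i, ∑ j, a i j * c i * c j := by
          have : S * (σ * T) + T * (σ * S) + S * (T * σ^2 * S) + T = T * σ^2 := by
            linear_combination (-T) * (σ * S + σ + 1) * hσ1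
          rw [this]
  have hsq : T / (1 - S)^2 = T * σ^2 := by
    rw [hσ]; field_simp
  constructor
  · rw [hDt', hsq]
  · rw [hDt', hp]
    have h3 : T / (1 - S) = T * σ := by rw [hσ]; field_simp
    rw [h3]
    have h4 : T * σ ≤ T * σ^2 := by
      nlinarith [mul_nonneg (mul_nonneg hT0 hσpos.le) (sub_nonneg.mpr hσge)]
    linarith
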